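/- For all x, y ∈ J and every word σ ∈ Ω, one has ξ^{-1} ‖φ'_σ‖ d(x,y) ≤ d(φ_σ(x), φ_σ(y)) ≤ ‖φ'_σ‖ d(x,y), where d denotes the Euclidean distance on ℝ. -/

import Mathlib

open MeasureTheory Filter Metric

noncomputable section

/-- A cookie-cutter system on `J = [0,1]`. -/
structure CookieCutter where
  N : ℕ
  hN : 2 ≤ N
  Jsub : Fin N → Set ℝ
  f : ℝ → ℝ
  φ : Fin N → ℝ → ℝ
  c : ℝ
  γ : ℝ
  b : ℝ
  B : ℝ
  hJsub_sub : ∀ j, Jsub j ⊆ Set.Icc 0 1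
  hJsub_interval : ∀ j, ∃ u v : ℝ, u ≤ v ∧ Jsub j = Set.Icc u v
  hJsub_disj : ∀ i j, i ≠ j → Disjoint (Jsub i) (Jsub j)
  hbij : ∀ j, Set.BijOn f (Jsub j) (Set.Icc 0 1)
  hφ_maps : ∀ j, ∀ x ∈ Set.Icc (0:ℝ) 1, φ j x ∈ Jsub j
  hφ_rinv : ∀ j, ∀ x ∈ Set.Icc (0:ℝ) 1, f (φ j x) = x
  hφ_linv : ∀ j, ∀ x ∈ Jsub j, φ j (f x) = x
  hfdiff : ∀ j, ∀ x ∈ Jsub j, DifferentiableAt ℝ f x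
  hφdiff : ∀ j, ∀ x ∈ Set.Icc (0:ℝ) 1, DifferentiableAt ℝ (φ j) x
  hc : 0 < c
  hγ : γ ∈ Set.Ioc (0:ℝ) 1
  hHolder : ∀ j, ∀ x ∈ Jsub j, ∀ y ∈ Jsub j, |deriv f x - deriv f y| ≤ c * |x - y| ^ γ
  hb : IsGLB ((fun x => |deriv f x|) '' ⋃ j, Jsub j) b
  hB : IsLUB ((fun x => |deriv f x|) '' ⋃ j, Jsub j) B
  hb1 : 1 < b

namespace CookieCutter

variable (cc : CookieCutter)

/-- `φ_σ = φ_{σ_1} ∘ ⋯ ∘ φ_{σ_n}` for a word `σ`. -/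
def wordMap : List (Fin cc.N) → ℝ → ℝ
  | [] => id
  | j :: rest => cc.φ j ∘ wordMap rest

/-- The basic interval `J_σ = φ_σ(J)`. -/
def Jc (σ : List (Fin cc.N)) : Set ℝ := cc.wordMap σ '' Set.Icc 0 1

/-- The diameter `|J_σ|`. -/
def diamJ (σ : List (Fin cc.N)) : ℝ := Metric.diam (cc.Jc σ)

/-- `‖φ'_σ‖ = sup_{x ∈ J} |φ'_σ(x)|`. -/
def φnorm (σ : List (Fin cc.N)) : ℝ :=
  sSup ((fun x => |deriv (cc.wordMap σ) x|) '' Set.Icc 0 1)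

/-- The distortion constant `ξ = exp (c / (b^γ − 1))`. -/
def xi : ℝ := Real.exp (cc.c / (cc.b ^ cc.γ - 1))

/-- The cookie-cutter set `E = ⋂_{n ≥ 1} ⋃_{σ ∈ Ω_n} J_σ`. -/
def E : Set ℝ := ⋂ (n : ℕ) (_ : 1 ≤ n), ⋃ σ : Fin n → Fin cc.N, cc.Jc (List.ofFn σ)

/-- `η = ξ^{9h}`. -/
def eta (h : ℝ) : ℝ := cc.xi ^ ((9:ℝ) * h)

/-- `L = η³ ξ^{3h}`. -/
def Lconst (h : ℝ) : ℝ := (cc.eta h) ^ 3 * cc.xi ^ ((3:ℝ) * h)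

/-- A Gibbs-like measure for the cookie-cutter system: a Borel probability measure
supported on `E` with `η⁻¹|J_σ|^h ≤ μ(J_σ) ≤ η|J_σ|^h` for every word `σ`. -/
def IsGibbsLike (μ : Measure ℝ) (h : ℝ) : Prop :=
  IsProbabilityMeasure μ ∧ μ (cc.Eᶜ) = 0 ∧
    ∀ σ : List (Fin cc.N), σ ≠ [] →
      (cc.eta h)⁻¹ * cc.diamJ σ ^ h ≤ (μ (cc.Jc σ)).toReal ∧
      (μ (cc.Jc σ)).toReal ≤ cc.eta h * cc.diamJ σ ^ h

/-- A finite maximal antichain in `Ω`. -/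
def IsFMA (Γ : Finset (List (Fin cc.N))) : Prop :=
  (∀ σ ∈ Γ, σ ≠ []) ∧
  (∀ ω : ℕ → Fin cc.N, ∃ k : ℕ, 1 ≤ k ∧ (List.ofFn fun i : Fin k => ω i) ∈ Γ) ∧
  ∀ σ ∈ Γ, ∀ τ ∈ Γ, σ <+: τ → σ = τ

end CookieCutter

/-- The `n`-th quantization error of order `r`. -/
def Vnr (μ : Measure ℝ) (n : ℕ) (r : ℝ) : ℝ :=
  sInf ((fun α : Finset ℝ => ∫ x, Metric.infDist x (α : Set ℝ) ^ r ∂μ) ''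
    {α : Finset ℝ | α.Nonempty ∧ α.card ≤ n})

/-- The auxiliary quantization error `u_{n,r}` with `U = (0,1)`. -/
def unr (μ : Measure ℝ) (n : ℕ) (r : ℝ) : ℝ :=
  sInf ((fun α : Finset ℝ =>
      ∫ x, Metric.infDist x ((α : Set ℝ) ∪ (Set.Ioo (0:ℝ) 1)ᶜ) ^ r ∂μ) ''
    {α : Finset ℝ | α.card ≤ n})


namespace CookieCutter

variable (cc : CookieCutter)

lemma b_pos : 0 < cc.b := lt_trans one_pos cc.hb1

lemma b_rpow_gt_one : 1 < cc.b ^ cc.γ :=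
  Real.one_lt_rpow_iff_of_pos cc.b_pos |>.2 (Or.inl ⟨cc.hb1, cc.hγ.1⟩)

lemma xi_pos : 0 < cc.xi := Real.exp_pos _

lemma one_le_xi : 1 ≤ cc.xi := by
  rw [xi, Real.one_le_exp_iff]
  have h1 : (0:ℝ) < cc.b ^ cc.γ - 1 := by linarith [cc.b_rpow_gt_one]
  exact div_nonneg cc.hc.le h1.le

lemma b_le_abs_deriv {j : Fin cc.N} {z : ℝ} (hz : z ∈ cc.Jsub j) :
    cc.b ≤ |deriv cc.f z| :=
  cc.hb.1 ⟨z, Set.mem_iUnion.2 ⟨j, hz⟩, rfl⟩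

lemma phi_mem {j : Fin cc.N} {x : ℝ} (hx : x ∈ Set.Icc (0:ℝ) 1) :
    cc.φ j x ∈ Set.Icc (0:ℝ) 1 :=
  cc.hJsub_sub j (cc.hφ_maps j x hx)

lemma deriv_mul_eq_one {j : Fin cc.N} {x : ℝ} (hx : x ∈ Set.Icc (0:ℝ) 1) :
    deriv cc.f (cc.φ j x) * deriv (cc.φ j) x = 1 := by
  have hzJ : cc.φ j x ∈ cc.Jsub j := cc.hφ_maps j x hx
  have hf : HasDerivAt cc.f (deriv cc.f (cc.φ j x)) (cc.φ j x) :=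
    (cc.hfdiff j _ hzJ).hasDerivAt
  have hφ : HasDerivAt (cc.φ j) (deriv (cc.φ j) x) x :=
    (cc.hφdiff j x hx).hasDerivAt
  have hcomp : HasDerivAt (cc.f ∘ cc.φ j)
      (deriv cc.f (cc.φ j x) * deriv (cc.φ j) x) x := hf.comp x hφ
  have h1 : HasDerivWithinAt (cc.f ∘ cc.φ j)
      (deriv cc.f (cc.φ j x) * deriv (cc.φ j) x) (Set.Icc 0 1) x :=
    hcomp.hasDerivWithinAt
  have h2 : HasDerivWithinAt (cc.f ∘ cc.φ j) 1 (Set.Icc 0 1) x := by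
    have hid : HasDerivWithinAt (fun y : ℝ => y) 1 (Set.Icc 0 1) x :=
      (hasDerivAt_id x).hasDerivWithinAt
    exact hid.congr (fun y hy => cc.hφ_rinv j y hy) (cc.hφ_rinv j x hx)
  have hu : UniqueDiffWithinAt ℝ (Set.Icc (0:ℝ) 1) x :=
    (uniqueDiffOn_Icc one_pos) x hx
  rw [← h1.derivWithin hu, h2.derivWithin hu]

lemma abs_deriv_phi_le {j : Fin cc.N} {x : ℝ} (hx : x ∈ Set.Icc (0:ℝ) 1) :
    |deriv (cc.φ j) x| ≤ cc.b⁻¹ := by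
  have h := cc.deriv_mul_eq_one (j := j) hx
  have hb := cc.b_le_abs_deriv (cc.hφ_maps j x hx)
  have habs : |deriv cc.f (cc.φ j x)| * |deriv (cc.φ j) x| = 1 := by
    rw [← abs_mul, h, abs_one]
  rw [inv_eq_one_div, le_div_iff₀ cc.b_pos]
  calc |deriv (cc.φ j) x| * cc.b ≤ |deriv (cc.φ j) x| * |deriv cc.f (cc.φ j x)| := by
        apply mul_le_mul_of_nonneg_left hb (abs_nonneg _)
    _ = 1 := by rw [mul_comm]; exact habs

lemma phi_lip {j : Fin cc.N} {x y : ℝ} (hx : x ∈ Set.Icc (0:ℝ) 1)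
    (hy : y ∈ Set.Icc (0:ℝ) 1) :
    dist (cc.φ j x) (cc.φ j y) ≤ cc.b⁻¹ * dist x y := by
  have := (convex_Icc (0:ℝ) 1).norm_image_sub_le_of_norm_deriv_le
    (f := cc.φ j) (C := cc.b⁻¹) (fun z hz => cc.hφdiff j z hz)
    (fun z hz => by simpa [Real.norm_eq_abs] using cc.abs_deriv_phi_le hz) hy hx
  simpa [Real.dist_eq, Real.norm_eq_abs] using this

end CookieCutter
namespace CookieCutter

lemma wordMap_mem (cc : CookieCutter) : ∀ σ : List (Fin cc.N), ∀ x ∈ Set.Icc (0:ℝ) 1,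
    cc.wordMap σ x ∈ Set.Icc (0:ℝ) 1
  | [], x, hx => hx
  | j :: rest, x, hx => cc.phi_mem (cc.wordMap_mem rest x hx)

lemma wordMap_diff (cc : CookieCutter) : ∀ σ : List (Fin cc.N), ∀ x ∈ Set.Icc (0:ℝ) 1,
    DifferentiableAt ℝ (cc.wordMap σ) x
  | [], x, _ => differentiableAt_id
  | j :: rest, x, hx => by
    have h1 := cc.wordMap_diff rest x hx
    have h2 := cc.hφdiff j _ (cc.wordMap_mem rest x hx)
    exact h2.comp x h1

lemma deriv_wordMap_cons (cc : CookieCutter) (j : Fin cc.N) (σ : List (Fin cc.N))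
    {x : ℝ} (hx : x ∈ Set.Icc (0:ℝ) 1) :
    deriv (cc.wordMap (j :: σ)) x
      = deriv (cc.φ j) (cc.wordMap σ x) * deriv (cc.wordMap σ) x := by
  have h1 : HasDerivAt (cc.wordMap σ) (deriv (cc.wordMap σ) x) x :=
    (cc.wordMap_diff σ x hx).hasDerivAt
  have h2 : HasDerivAt (cc.φ j) (deriv (cc.φ j) (cc.wordMap σ x)) (cc.wordMap σ x) :=
    (cc.hφdiff j _ (cc.wordMap_mem σ x hx)).hasDerivAt
  exact (h2.comp x h1).deriv

lemma wordMap_contract (cc : CookieCutter) : ∀ σ : List (Fin cc.N),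
    ∀ x ∈ Set.Icc (0:ℝ) 1, ∀ y ∈ Set.Icc (0:ℝ) 1,
    dist (cc.wordMap σ x) (cc.wordMap σ y) ≤ cc.b⁻¹ ^ σ.length * dist x y
  | [], x, hx, y, hy => by simp [wordMap]
  | j :: rest, x, hx, y, hy => by
    have h1 := cc.wordMap_contract rest x hx y hy
    have h2 := cc.phi_lip (j := j) (cc.wordMap_mem rest x hx) (cc.wordMap_mem rest y hy)
    have hbi : (0:ℝ) ≤ cc.b⁻¹ := inv_nonneg.2 cc.b_pos.le
    calc dist (cc.wordMap (j :: rest) x) (cc.wordMap (j :: rest) y)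
        ≤ cc.b⁻¹ * dist (cc.wordMap rest x) (cc.wordMap rest y) := h2
      _ ≤ cc.b⁻¹ * (cc.b⁻¹ ^ rest.length * dist x y) :=
          mul_le_mul_of_nonneg_left h1 hbi
      _ = cc.b⁻¹ ^ (j :: rest).length * dist x y := by
          rw [List.length_cons, pow_succ]; ring

end CookieCutter
namespace CookieCutter

lemma ratio_phi (cc : CookieCutter) {j : Fin cc.N} {x y : ℝ}
    (hx : x ∈ Set.Icc (0:ℝ) 1) (hy : y ∈ Set.Icc (0:ℝ) 1) :
    |deriv (cc.φ j) x| ≤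
      Real.exp (cc.c * (cc.b ^ cc.γ)⁻¹ * dist x y ^ cc.γ) * |deriv (cc.φ j) y| := by
  set A := |deriv cc.f (cc.φ j x)| with hAdef
  set Bv := |deriv cc.f (cc.φ j y)| with hBdef
  have hA1 : A * |deriv (cc.φ j) x| = 1 := by
    rw [hAdef, ← abs_mul, cc.deriv_mul_eq_one hx, abs_one]
  have hB1 : Bv * |deriv (cc.φ j) y| = 1 := by
    rw [hBdef, ← abs_mul, cc.deriv_mul_eq_one hy, abs_one]
  have hbA : cc.b ≤ A := cc.b_le_abs_deriv (cc.hφ_maps j x hx)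
  have hbB : cc.b ≤ Bv := cc.b_le_abs_deriv (cc.hφ_maps j y hy)
  have hA0 : 0 < A := cc.b_pos.trans_le hbA
  have hB0 : 0 < Bv := cc.b_pos.trans_le hbB
  have hhold : Bv - A ≤ cc.c * |cc.φ j y - cc.φ j x| ^ cc.γ := by
    have h1 := cc.hHolder j _ (cc.hφ_maps j y hy) _ (cc.hφ_maps j x hx)
    have h2 := abs_sub_abs_le_abs_sub (deriv cc.f (cc.φ j y)) (deriv cc.f (cc.φ j x))
    rw [hAdef, hBdef]; linarith
  set d := dist x y with hd
  have hd0 : (0:ℝ) ≤ d := dist_nonneg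
  have hst : |cc.φ j y - cc.φ j x| ^ cc.γ ≤ (cc.b ^ cc.γ)⁻¹ * d ^ cc.γ := by
    have h1 : |cc.φ j y - cc.φ j x| ≤ cc.b⁻¹ * d := by
      have h := cc.phi_lip (j := j) hy hx
      rw [Real.dist_eq] at h
      rwa [hd, dist_comm]
    calc |cc.φ j y - cc.φ j x| ^ cc.γ ≤ (cc.b⁻¹ * d) ^ cc.γ :=
          Real.rpow_le_rpow (abs_nonneg _) h1 cc.hγ.1.le
      _ = (cc.b⁻¹) ^ cc.γ * d ^ cc.γ :=
          Real.mul_rpow (inv_nonneg.2 cc.b_pos.le) hd0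
      _ = (cc.b ^ cc.γ)⁻¹ * d ^ cc.γ := by rw [Real.inv_rpow cc.b_pos.le]
  set E := cc.c * (cc.b ^ cc.γ)⁻¹ * d ^ cc.γ with hE
  have hE0 : 0 ≤ E := by
    apply mul_nonneg (mul_nonneg cc.hc.le _) (Real.rpow_nonneg hd0 _)
    exact inv_nonneg.2 (Real.rpow_nonneg cc.b_pos.le _)
  have key : Bv ≤ A * (1 + E) := by
    have h3 : cc.c * |cc.φ j y - cc.φ j x| ^ cc.γ ≤ E := by
      rw [hE, mul_assoc]
      exact mul_le_mul_of_nonneg_left hst cc.hc.le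
    nlinarith [cc.hb1, hbA]
  have hfin : Bv ≤ Real.exp E * A := by
    calc Bv ≤ A * (1 + E) := key
      _ ≤ A * Real.exp E := by
        apply mul_le_mul_of_nonneg_left _ hA0.le
        linarith [Real.add_one_le_exp E]
      _ = Real.exp E * A := mul_comm _ _
  have hx' : |deriv (cc.φ j) x| = A⁻¹ := eq_inv_of_mul_eq_one_right hA1
  have hy' : |deriv (cc.φ j) y| = Bv⁻¹ := eq_inv_of_mul_eq_one_right hB1
  rw [hx', hy']
  have h5 : Bv / Real.exp E ≤ A :=
    (div_le_iff₀ (Real.exp_pos E)).2 (hfin.trans_eq (mul_comm _ _))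
  have h6 : A⁻¹ ≤ (Bv / Real.exp E)⁻¹ :=
    inv_anti₀ (div_pos hB0 (Real.exp_pos E)) h5
  refine h6.trans_eq ?_
  rw [inv_div, div_eq_mul_inv]

end CookieCutter
namespace CookieCutter

lemma distortion (cc : CookieCutter) : ∀ σ : List (Fin cc.N),
    ∀ u ∈ Set.Icc (0:ℝ) 1, ∀ v ∈ Set.Icc (0:ℝ) 1,
    |deriv (cc.wordMap σ) u| ≤
      Real.exp (cc.c * ∑ m ∈ Finset.range σ.length, ((cc.b ^ cc.γ)⁻¹) ^ (m + 1)) *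
        |deriv (cc.wordMap σ) v|
  | [], u, hu, v, hv => by
    simp [wordMap, deriv_id'']
  | j :: rest, u, hu, v, hv => by
    set q := (cc.b ^ cc.γ)⁻¹ with hq
    have hq0 : 0 ≤ q := inv_nonneg.2 (Real.rpow_nonneg cc.b_pos.le _)
    set n := rest.length with hn
    have IH := cc.distortion rest u hu v hv
    have hWu := cc.wordMap_mem rest u hu
    have hWv := cc.wordMap_mem rest v hv
    have hratio := cc.ratio_phi (j := j) hWu hWv
    have hdist : dist (cc.wordMap rest u) (cc.wordMap rest v) ≤ cc.b⁻¹ ^ n := by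
      have h1 := cc.wordMap_contract rest u hu v hv
      have h2 : dist u v ≤ 1 := Real.dist_le_of_mem_Icc_01 hu hv
      have h3 : (0:ℝ) ≤ cc.b⁻¹ ^ n := pow_nonneg (inv_nonneg.2 cc.b_pos.le) n
      calc dist (cc.wordMap rest u) (cc.wordMap rest v)
          ≤ cc.b⁻¹ ^ n * dist u v := h1
        _ ≤ cc.b⁻¹ ^ n * 1 := mul_le_mul_of_nonneg_left h2 h3
        _ = cc.b⁻¹ ^ n := mul_one _
    have hdg : dist (cc.wordMap rest u) (cc.wordMap rest v) ^ cc.γ ≤ q ^ n := by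
      calc dist (cc.wordMap rest u) (cc.wordMap rest v) ^ cc.γ
          ≤ (cc.b⁻¹ ^ n) ^ cc.γ := Real.rpow_le_rpow dist_nonneg hdist cc.hγ.1.le
        _ = (cc.b⁻¹ ^ cc.γ) ^ n := by
            rw [← Real.rpow_natCast cc.b⁻¹ n, ← Real.rpow_natCast (cc.b⁻¹ ^ cc.γ) n,
              ← Real.rpow_mul (inv_nonneg.2 cc.b_pos.le),
              ← Real.rpow_mul (inv_nonneg.2 cc.b_pos.le), mul_comm]
        _ = q ^ n := by rw [hq, Real.inv_rpow cc.b_pos.le]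
    have hratio' : |deriv (cc.φ j) (cc.wordMap rest u)| ≤
        Real.exp (cc.c * q ^ (n + 1)) * |deriv (cc.φ j) (cc.wordMap rest v)| := by
      refine hratio.trans (mul_le_mul_of_nonneg_right ?_ (abs_nonneg _))
      apply Real.exp_le_exp.2
      calc cc.c * q * dist (cc.wordMap rest u) (cc.wordMap rest v) ^ cc.γ
          ≤ cc.c * q * q ^ n :=
            mul_le_mul_of_nonneg_left hdg (mul_nonneg cc.hc.le hq0)
        _ = cc.c * q ^ (n + 1) := by rw [pow_succ]; ring
    rw [cc.deriv_wordMap_cons j rest hu, cc.deriv_wordMap_cons j rest hv, abs_mul, abs_mul]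
    calc |deriv (cc.φ j) (cc.wordMap rest u)| * |deriv (cc.wordMap rest) u|
        ≤ (Real.exp (cc.c * q ^ (n + 1)) * |deriv (cc.φ j) (cc.wordMap rest v)|) *
          (Real.exp (cc.c * ∑ m ∈ Finset.range n, q ^ (m + 1)) *
            |deriv (cc.wordMap rest) v|) := by
          apply mul_le_mul hratio' IH (abs_nonneg _)
          positivity
      _ = Real.exp (cc.c * ∑ m ∈ Finset.range (j :: rest).length, q ^ (m + 1)) *
          (|deriv (cc.φ j) (cc.wordMap rest v)| * |deriv (cc.wordMap rest) v|) := by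
          rw [List.length_cons, Finset.sum_range_succ, mul_add, Real.exp_add]
          ring


lemma distortion_xi (cc : CookieCutter) (σ : List (Fin cc.N))
    {u v : ℝ} (hu : u ∈ Set.Icc (0:ℝ) 1) (hv : v ∈ Set.Icc (0:ℝ) 1) :
    |deriv (cc.wordMap σ) u| ≤ cc.xi * |deriv (cc.wordMap σ) v| := by
  refine (cc.distortion σ u hu v hv).trans
    (mul_le_mul_of_nonneg_right ?_ (abs_nonneg _))
  rw [xi]
  apply Real.exp_le_exp.2
  set q := (cc.b ^ cc.γ)⁻¹ with hq
  have hB1 : 1 < cc.b ^ cc.γ := cc.b_rpow_gt_one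
  have hq0 : 0 ≤ q := inv_nonneg.2 (Real.rpow_nonneg cc.b_pos.le _)
  have hq1 : q < 1 := by
    rw [hq]
    exact inv_lt_one_of_one_lt₀ hB1
  have hsum : ∑ m ∈ Finset.range σ.length, q ^ (m + 1) ≤ (cc.b ^ cc.γ - 1)⁻¹ := by
    have h1 : ∑ m ∈ Finset.range σ.length, q ^ (m + 1)
        = q * ∑ m ∈ Finset.range σ.length, q ^ m := by
      rw [Finset.mul_sum]
      refine Finset.sum_congr rfl fun m _ => ?_
      rw [pow_succ]; ring
    have h2 : ∑ m ∈ Finset.range σ.length, q ^ m ≤ (1 - q)⁻¹ :=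
      (Summable.sum_le_tsum _ (fun i _ => pow_nonneg hq0 i)
        (summable_geometric_of_lt_one hq0 hq1)).trans_eq
        (tsum_geometric_of_lt_one hq0 hq1)
    have h3 : q * (1 - q)⁻¹ = (cc.b ^ cc.γ - 1)⁻¹ := by
      rw [hq]
      have hB0 : cc.b ^ cc.γ ≠ 0 := by positivity
      have hB1' : cc.b ^ cc.γ - 1 ≠ 0 := by linarith
      field_simp
    calc ∑ m ∈ Finset.range σ.length, q ^ (m + 1)
        = q * ∑ m ∈ Finset.range σ.length, q ^ m := h1
      _ ≤ q * (1 - q)⁻¹ := mul_le_mul_of_nonneg_left h2 hq0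
      _ = (cc.b ^ cc.γ - 1)⁻¹ := h3
  rw [div_eq_mul_inv]
  exact mul_le_mul_of_nonneg_left hsum cc.hc.le

end CookieCutter
namespace CookieCutter

lemma exists_mvt (cc : CookieCutter) (σ : List (Fin cc.N)) {x y : ℝ}
    (hx : x ∈ Set.Icc (0:ℝ) 1) (hy : y ∈ Set.Icc (0:ℝ) 1) (hxy : x < y) :
    ∃ ζ ∈ Set.Icc (0:ℝ) 1,
      dist (cc.wordMap σ x) (cc.wordMap σ y) = |deriv (cc.wordMap σ) ζ| * dist x y := by
  have hsub : Set.Icc x y ⊆ Set.Icc (0:ℝ) 1 := Set.Icc_subset_Icc hx.1 hy.2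
  have hcont : ContinuousOn (cc.wordMap σ) (Set.Icc x y) := fun z hz =>
    (cc.wordMap_diff σ z (hsub hz)).continuousAt.continuousWithinAt
  have hderiv : ∀ z ∈ Set.Ioo x y, HasDerivAt (cc.wordMap σ) (deriv (cc.wordMap σ) z) z :=
    fun z hz => (cc.wordMap_diff σ z (hsub (Set.Ioo_subset_Icc_self hz))).hasDerivAt
  obtain ⟨ζ, hζ, heq⟩ := exists_hasDerivAt_eq_slope (cc.wordMap σ) _ hxy hcont hderiv
  refine ⟨ζ, hsub (Set.Ioo_subset_Icc_self hζ), ?_⟩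
  have hyx : 0 < y - x := sub_pos.2 hxy
  have h1 : |deriv (cc.wordMap σ) ζ| * (y - x) = |cc.wordMap σ y - cc.wordMap σ x| := by
    rw [heq, abs_div, abs_of_pos hyx, div_mul_cancel₀ _ hyx.ne']
  have h2 : dist x y = y - x := by
    rw [Real.dist_eq, abs_sub_comm, abs_of_pos hyx]
  rw [Real.dist_eq, abs_sub_comm, h2, h1]

lemma main_aux (cc : CookieCutter) (σ : List (Fin cc.N)) {x y : ℝ}
    (hx : x ∈ Set.Icc (0:ℝ) 1) (hy : y ∈ Set.Icc (0:ℝ) 1) (hxy : x < y) :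
    cc.xi⁻¹ * cc.φnorm σ * dist x y ≤ dist (cc.wordMap σ x) (cc.wordMap σ y) ∧
      dist (cc.wordMap σ x) (cc.wordMap σ y) ≤ cc.φnorm σ * dist x y := by
  obtain ⟨ζ, hζ, heq⟩ := cc.exists_mvt σ hx hy hxy
  set K := |deriv (cc.wordMap σ) ζ| with hK
  set S := (fun z => |deriv (cc.wordMap σ) z|) '' Set.Icc (0:ℝ) 1 with hS
  have hbdd : ∀ w ∈ S, w ≤ cc.xi * K := by
    rintro w ⟨u, hu, rfl⟩
    exact cc.distortion_xi σ hu hζ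
  have hKS : K ∈ S := ⟨ζ, hζ, rfl⟩
  have hupper : K ≤ cc.φnorm σ := le_csSup ⟨cc.xi * K, hbdd⟩ hKS
  have hlower : cc.φnorm σ ≤ cc.xi * K := csSup_le ⟨K, hKS⟩ hbdd
  have hlow2 : cc.xi⁻¹ * cc.φnorm σ ≤ K := by
    rw [← inv_mul_cancel_left₀ cc.xi_pos.ne' K]
    exact mul_le_mul_of_nonneg_left hlower (inv_nonneg.2 cc.xi_pos.le)
  constructor
  · rw [heq]
    exact mul_le_mul_of_nonneg_right hlow2 dist_nonneg
  · rw [heq]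
    exact mul_le_mul_of_nonneg_right hupper dist_nonneg

end CookieCutter

theorem wordMap_lipschitz_bounds (cc : CookieCutter) :
    ∀ x ∈ Set.Icc (0:ℝ) 1, ∀ y ∈ Set.Icc (0:ℝ) 1, ∀ σ : List (Fin cc.N), σ ≠ [] →
      cc.xi⁻¹ * cc.φnorm σ * dist x y ≤ dist (cc.wordMap σ x) (cc.wordMap σ y) ∧
      dist (cc.wordMap σ x) (cc.wordMap σ y) ≤ cc.φnorm σ * dist x y := by
  intro x hx y hy σ _
  rcases lt_trichotomy x y with h | h | h
  · exact cc.main_aux σ hx hy h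
  · subst h
    simp
  · have := cc.main_aux σ hy hx h
    rwa [dist_comm y x, dist_comm (cc.wordMap σ y) (cc.wordMap σ x)] at this
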